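/- MV-Sketch with r = log₂(1/δ) rows and w = 2/ε columns reports every heavy hitter x with S(x) ≥ φS with probability at least 1 − δ, provided φ ≥ ε. Concretely, the probability that x fails to be the majority flow (S(x) > V_i/2) in all of its r hashed buckets is at most (1/2)^r = δ. -/

import Mathlib

/-- State of a bucket in MV-Sketch: total value `V`, candidate key `K`,
indicator counter `C`. -/
structure Bucket (α : Type*) where
  V : ℝ
  K : α
  C : ℝ

/-- One update of the generalized majority vote algorithm on input `(y, v)`. -/
noncomputable def Bucket.step {α : Type*} [DecidableEq α] (b : Bucket α) (p : α × ℝ) :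
    Bucket α :=
  if p.1 = b.K then ⟨b.V + p.2, b.K, b.C + p.2⟩
  else if b.C - p.2 < 0 then ⟨b.V + p.2, p.1, p.2 - b.C⟩
  else ⟨b.V + p.2, b.K, b.C - p.2⟩

/-- State of the bucket after processing the whole stream `l`, starting from
an arbitrary initial key `k0`, `V = 0`, `C = 0`. -/
noncomputable def runBucket {α : Type*} [DecidableEq α] (k0 : α) (l : List (α × ℝ)) :
    Bucket α :=
  l.foldl Bucket.step ⟨0, k0, 0⟩

/-- Total value of flow `x` in the stream `l`. -/
def flowSum {α : Type*} [DecidableEq α] (x : α) (l : List (α × ℝ)) : ℝ :=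
  ((l.filter fun p => p.1 = x).map Prod.snd).sum

open MeasureTheory ProbabilityTheory
open scoped ENNReal

lemma foldl_step_V {α : Type*} [DecidableEq α] (l : List (α × ℝ)) :
    ∀ b : Bucket α, (l.foldl Bucket.step b).V = b.V + (l.map Prod.snd).sum := by
  induction l with
  | nil => simp
  | cons p l ih =>
    intro b
    rw [List.foldl_cons, ih]
    have : (b.step p).V = b.V + p.2 := by
      unfold Bucket.step; split_ifs <;> rfl
    rw [this]; simp; ring

lemma runBucket_V {α : Type*} [DecidableEq α] (k0 : α) (l : List (α × ℝ)) :
    (runBucket k0 l).V = (l.map Prod.snd).sum := by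
  simp [runBucket, foldl_step_V]

lemma list_sum_map_eq_sum_get {α : Type*} (l : List α) (f : α → ℝ) :
    (l.map f).sum = ∑ i : Fin l.length, f (l.get i) := by
  conv_lhs => rw [← List.ofFn_get l]
  rw [List.map_ofFn, List.sum_ofFn]
  rfl

lemma filter_map_sum_ite {α : Type*} (q : α → Prop) [DecidablePred q] (l : List α)
    (f : α → ℝ) :
    ((l.filter fun p => q p).map f).sum = (l.map fun p => if q p then f p else 0).sum := by
  induction l with
  | nil => simp
  | cons p l ih => by_cases h : q p <;> simp [List.filter_cons, h, ih]

lemma sum_map_add' {α : Type*} (l : List α) (f g : α → ℝ) :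
    (l.map fun p => f p + g p).sum = (l.map f).sum + (l.map g).sum := by
  induction l with
  | nil => simp
  | cons p l ih => simp [ih]; ring

/-- Heavy hitter detection bound of MV-Sketch with `r = log₂(1/δ)` rows and
`w = 2/ε` buckets per row: for a heavy hitter `x` (with `S(x) ≥ φ𝒮` and
`φ ≥ ε`), the probability that `x` fails to be the majority flow
(`S(x) > V_i/2`) in all of its `r` hashed buckets is at most `(1/2)^r = δ`;
hence `x` is the majority flow of some hashed bucket — and is thus stored and
reported — with probability at least `1 − δ`. -/
theorem heavy_hitter_detection_bound {Ω : Type*} [MeasurableSpace Ω]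
    (μ : Measure Ω) [IsProbabilityMeasure μ]
    (n r w : ℕ) (hr : 0 < r) (hw : 0 < w)
    (ε δ φ : ℝ) (hε0 : 0 < ε) (hε1 : ε < 1)
    (hδ : δ = (1 / 2 : ℝ) ^ r) (hwε : (w : ℝ) = 2 / ε)
    (hφ0 : 0 < φ) (hφ1 : φ < 1) (hφε : ε ≤ φ)
    (l : List (Fin n × ℝ)) (hv : ∀ p ∈ l, 0 ≤ p.2) (k0 x : Fin n)
    (hStot : 0 < (l.map Prod.snd).sum)
    (hheavy : φ * (l.map Prod.snd).sum ≤ flowSum x l)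
    (g : Ω → Fin r → Fin n → Fin w)
    (hrows : iIndepFun (fun i ω => g ω i) μ)
    (huniform : ∀ i y j, μ {ω | g ω i y = j} = ENNReal.ofReal (1 / (w : ℝ)))
    (hpair : ∀ (i : Fin r) (y z : Fin n), y ≠ z → ∀ j j',
      μ {ω | g ω i y = j ∧ g ω i z = j'} =
        μ {ω | g ω i y = j} * μ {ω | g ω i z = j'}) :
    μ {ω | ∀ i : Fin r,
        flowSum x l ≤ (runBucket k0 (l.filter fun p => g ω i p.1 = g ω i x)).V / 2}
      ≤ ENNReal.ofReal ((1 / 2 : ℝ) ^ r) ∧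
    ENNReal.ofReal (1 - δ) ≤
      μ {ω | ∃ i : Fin r,
        (runBucket k0 (l.filter fun p => g ω i p.1 = g ω i x)).V / 2 < flowSum x l} := by
  classical
  set S : ℝ := (l.map Prod.snd).sum with hSdef
  set a : ℝ := flowSum x l with hadef
  have ha : 0 < a := lt_of_lt_of_le (mul_pos hφ0 hStot) hheavy
  have hw0 : (0 : ℝ) < w := Nat.cast_pos.mpr hw
  set E : Fin r → Set Ω := fun i =>
    {ω | a ≤ ((l.filter fun p => g ω i p.1 = g ω i x).map Prod.snd).sum / 2} with hEdef
  have hset : {ω | ∀ i : Fin r,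
      a ≤ (runBucket k0 (l.filter fun p => g ω i p.1 = g ω i x)).V / 2}
      = ⋂ i, E i := by
    ext ω
    simp only [Set.mem_setOf_eq, Set.mem_iInter, hEdef, runBucket_V]
  -- decomposition of the filtered sum
  have hdecomp : ∀ (ω : Ω) (i : Fin r),
      ((l.filter fun p => g ω i p.1 = g ω i x).map Prod.snd).sum
        = a + (l.map fun p => if p.1 ≠ x ∧ g ω i p.1 = g ω i x then p.2 else 0).sum := by
    intro ω i
    rw [filter_map_sum_ite (fun p : Fin n × ℝ => g ω i p.1 = g ω i x) l Prod.snd]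
    have hflow : a = (l.map fun p : Fin n × ℝ => if p.1 = x then p.2 else 0).sum := by
      rw [hadef, flowSum]
      exact filter_map_sum_ite (fun p : Fin n × ℝ => p.1 = x) l Prod.snd
    rw [hflow, ← sum_map_add']
    congr 1
    refine List.map_congr_left fun p _ => ?_
    by_cases h1 : p.1 = x <;> simp [h1]
  -- collision probability bound
  have hofw : (w : ℝ≥0∞) * ENNReal.ofReal (1 / w) = 1 := by
    rw [← ENNReal.ofReal_natCast w, ← ENNReal.ofReal_mul (by positivity)]
    rw [mul_one_div, div_self (ne_of_gt hw0), ENNReal.ofReal_one]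
  have hcoll : ∀ (i : Fin r) (y : Fin n), y ≠ x →
      μ {ω | g ω i y = g ω i x} ≤ ENNReal.ofReal (1 / w) := by
    intro i y hy
    have hU : {ω | g ω i y = g ω i x} = ⋃ j : Fin w, {ω | g ω i y = j ∧ g ω i x = j} := by
      ext ω
      simp only [Set.mem_setOf_eq, Set.mem_iUnion]
      constructor
      · intro h; exact ⟨g ω i x, h, rfl⟩
      · rintro ⟨j, h1, h2⟩; rw [h1, h2]
    rw [hU]
    refine le_trans (measure_iUnion_fintype_le μ _) ?_
    have hsum : ∀ j : Fin w, μ {ω | g ω i y = j ∧ g ω i x = j}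
        = ENNReal.ofReal (1 / w) * ENNReal.ofReal (1 / w) := by
      intro j
      rw [hpair i y x hy j j, huniform, huniform]
    rw [Finset.sum_congr rfl fun j _ => hsum j, Finset.sum_const, Finset.card_univ,
      Fintype.card_fin, nsmul_eq_mul, ← mul_assoc, hofw, one_mul]
  -- per-row failure bound
  have hrow : ∀ i : Fin r, μ (E i) ≤ 1 / 2 := by
    intro i
    set A : Fin l.length → Set Ω := fun idx =>
      {ω | (l.get idx).1 ≠ x ∧ g ω i (l.get idx).1 = g ω i x} with hAdef
    set T : Fin l.length → Set Ω := fun idx => toMeasurable μ (A idx) with hTdef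
    have hTmeas : ∀ idx, MeasurableSet (T idx) := fun idx => measurableSet_toMeasurable μ _
    have hAT : ∀ idx, A idx ⊆ T idx := fun idx => subset_toMeasurable μ _
    have hmem : ∀ idx : Fin l.length, l.get idx ∈ l := fun idx => List.get_mem l idx
    have hμT : ∀ idx, μ (T idx) ≤ ENNReal.ofReal (1 / w) := by
      intro idx
      rw [hTdef]
      simp only
      rw [measure_toMeasurable]
      by_cases h : (l.get idx).1 = x
      · have hAe : A idx = ∅ :=
          Set.eq_empty_iff_forall_notMem.mpr fun ω hω => hω.1 h
        rw [hAe]; simp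
      · refine le_trans (measure_mono fun ω hω => hω.2) (hcoll i _ h)
    set f : Ω → ℝ≥0∞ := fun ω =>
      ∑ idx : Fin l.length, ENNReal.ofReal ((l.get idx).2) * (T idx).indicator 1 ω with hfdef
    have hfmeas : Measurable f := by
      apply Finset.measurable_sum
      intro idx _
      exact (measurable_one.indicator (hTmeas idx)).const_mul _
    have hEsub : E i ⊆ {ω | ENNReal.ofReal a ≤ f ω} := by
      intro ω hω
      simp only [hEdef, Set.mem_setOf_eq] at hω
      rw [hdecomp ω i] at hω
      set C : ℝ := (l.map fun p => if p.1 ≠ x ∧ g ω i p.1 = g ω i x then p.2 else 0).sum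
        with hCdef
      have haC : a ≤ C := by linarith
      have hCsum : C = ∑ idx : Fin l.length,
          (if (l.get idx).1 ≠ x ∧ g ω i (l.get idx).1 = g ω i x then (l.get idx).2 else 0) := by
        rw [hCdef, list_sum_map_eq_sum_get]
      have hCf : ENNReal.ofReal C ≤ f ω := by
        rw [hCsum, ENNReal.ofReal_sum_of_nonneg (by
          intro idx _
          split_ifs with h
          · exact hv _ (hmem idx)
          · exact le_refl 0)]
        apply Finset.sum_le_sum
        intro idx _
        by_cases h : (l.get idx).1 ≠ x ∧ g ω i (l.get idx).1 = g ω i x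
        · rw [if_pos h, Set.indicator_of_mem (hAT idx h), Pi.one_apply, mul_one]
        · rw [if_neg h]
          simp
      exact le_trans (ENNReal.ofReal_le_ofReal haC) hCf
    have hint : ∫⁻ ω, f ω ∂μ ≤ ENNReal.ofReal (S / w) := by
      rw [hfdef]
      simp only
      rw [lintegral_finset_sum _ fun idx _ =>
        (measurable_one.indicator (hTmeas idx)).const_mul _]
      have heach : ∀ idx : Fin l.length,
          ∫⁻ ω, ENNReal.ofReal ((l.get idx).2) * (T idx).indicator 1 ω ∂μ
            = ENNReal.ofReal ((l.get idx).2) * μ (T idx) := by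
        intro idx
        rw [lintegral_const_mul _ (measurable_one.indicator (hTmeas idx)),
          lintegral_indicator_one (hTmeas idx)]
      rw [Finset.sum_congr rfl fun idx _ => heach idx]
      calc ∑ idx : Fin l.length, ENNReal.ofReal ((l.get idx).2) * μ (T idx)
          ≤ ∑ idx : Fin l.length, ENNReal.ofReal ((l.get idx).2) * ENNReal.ofReal (1 / w) :=
            Finset.sum_le_sum fun idx _ => mul_le_mul_right (hμT idx) _
        _ = (∑ idx : Fin l.length, ENNReal.ofReal ((l.get idx).2)) * ENNReal.ofReal (1 / w) :=
            (Finset.sum_mul _ _ _).symm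
        _ = ENNReal.ofReal (∑ idx : Fin l.length, (l.get idx).2) * ENNReal.ofReal (1 / w) := by
            rw [ENNReal.ofReal_sum_of_nonneg fun idx _ => hv _ (hmem idx)]
        _ = ENNReal.ofReal (S / w) := by
            rw [← ENNReal.ofReal_mul (Finset.sum_nonneg fun idx _ => hv _ (hmem idx))]
            congr 1
            rw [hSdef, list_sum_map_eq_sum_get l Prod.snd, mul_one_div]
    have hμE : μ (E i) ≤ ENNReal.ofReal (S / w) / ENNReal.ofReal a := by
      rw [ENNReal.le_div_iff_mul_le
        (Or.inl (by simp only [ne_eq, ENNReal.ofReal_eq_zero, not_le]; linarith))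
        (Or.inl ENNReal.ofReal_ne_top)]
      calc μ (E i) * ENNReal.ofReal a = ENNReal.ofReal a * μ (E i) := mul_comm _ _
        _ ≤ ENNReal.ofReal a * μ {ω | ENNReal.ofReal a ≤ f ω} := by
            gcongr
        _ ≤ ∫⁻ ω, f ω ∂μ := mul_meas_ge_le_lintegral hfmeas _
        _ ≤ ENNReal.ofReal (S / w) := hint
    have hSw : S / w ≤ a / 2 := by
      rw [hwε]
      have h1 : S / (2 / ε) = S * ε / 2 := by field_simp
      rw [h1]
      nlinarith [hheavy, hφε, hStot.le]
    calc μ (E i) ≤ ENNReal.ofReal (S / w) / ENNReal.ofReal a := hμE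
      _ ≤ ENNReal.ofReal (a / 2) / ENNReal.ofReal a := by
          gcongr
      _ = ENNReal.ofReal ((a / 2) / a) := (ENNReal.ofReal_div_of_pos ha).symm
      _ = ENNReal.ofReal (1 / 2) := by
          congr 1
          field_simp
      _ = 1 / 2 := by
          rw [ENNReal.ofReal_div_of_pos (by norm_num), ENNReal.ofReal_one,
            ENNReal.ofReal_ofNat]
  -- independence across rows
  have hmeasE : ∀ i : Fin r,
      MeasurableSet[MeasurableSpace.comap (fun ω => g ω i) inferInstance] (E i) := by
    intro i
    refine ⟨{h : Fin n → Fin w |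
      a ≤ ((l.filter fun p => h p.1 = h x).map Prod.snd).sum / 2}, ?_, rfl⟩
    exact Set.Countable.measurableSet (Set.to_countable _)
  have hprod : μ (⋂ i, E i) = ∏ i : Fin r, μ (E i) := hrows.meas_iInter hmeasE
  have hofhalf : ENNReal.ofReal ((1 / 2 : ℝ) ^ r) = (1 / 2 : ℝ≥0∞) ^ r := by
    rw [ENNReal.ofReal_pow (by norm_num), ENNReal.ofReal_div_of_pos (by norm_num),
      ENNReal.ofReal_one, ENNReal.ofReal_ofNat]
  have hfirst : μ {ω | ∀ i : Fin r,
      a ≤ (runBucket k0 (l.filter fun p => g ω i p.1 = g ω i x)).V / 2}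
      ≤ ENNReal.ofReal ((1 / 2 : ℝ) ^ r) := by
    rw [hset, hofhalf]
    calc μ (⋂ i, E i) = ∏ i : Fin r, μ (E i) := hprod
      _ ≤ ∏ _i : Fin r, (1 / 2 : ℝ≥0∞) := Finset.prod_le_prod' fun i _ => hrow i
      _ = (1 / 2 : ℝ≥0∞) ^ r := by
          rw [Finset.prod_const, Finset.card_univ, Fintype.card_fin]
  refine ⟨hfirst, ?_⟩
  have hcompl : {ω | ∃ i : Fin r,
      (runBucket k0 (l.filter fun p => g ω i p.1 = g ω i x)).V / 2 < a}
      = {ω | ∀ i : Fin r,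
      a ≤ (runBucket k0 (l.filter fun p => g ω i p.1 = g ω i x)).V / 2}ᶜ := by
    ext ω
    simp only [Set.mem_setOf_eq, Set.mem_compl_iff, not_forall, not_le]
  rw [hcompl]
  set Abad := {ω | ∀ i : Fin r,
      a ≤ (runBucket k0 (l.filter fun p => g ω i p.1 = g ω i x)).V / 2} with hAbad
  have hunion : (1 : ℝ≥0∞) ≤ μ Abad + μ Abadᶜ := by
    have hle := measure_union_le (μ := μ) Abad Abadᶜ
    rwa [Set.union_compl_self, measure_univ] at hle
  have hδ0 : 0 ≤ δ := by rw [hδ]; positivity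
  have hδof : ENNReal.ofReal (1 - δ) = 1 - ENNReal.ofReal δ := by
    rw [ENNReal.ofReal_sub _ hδ0, ENNReal.ofReal_one]
  rw [hδof, tsub_le_iff_right]
  calc (1 : ℝ≥0∞) ≤ μ Abad + μ Abadᶜ := hunion
    _ ≤ ENNReal.ofReal δ + μ Abadᶜ := by
        gcongr
        rw [hδ]
        exact hfirst
    _ = μ Abadᶜ + ENNReal.ofReal δ := add_comm _ _
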